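/- arXiv:math/0306215 — 2 statements merged into one kernel-verified Lean document; each statement's English description precedes it below -/
import Mathlib

section
/- For all λ, μ ∈ P(m|n), K^{-1}_{λ,μ} = Σ ε(σ), where the sum is over all pairs (w,σ) ∈ S_n^λ × S_n satisfying the vector equation w(λ) + σ(δ(n)) = μ + δ(n) in ℕ^n, and ε(σ) is the sign of the permutation σ. -/
open Finset MvPolynomial

/-- The `p`-th entry of an `n`-tuple, with default value `0` out of range. -/
def nth (n : ℕ) (f : Fin n → ℕ) (p : ℕ) : ℕ := if h : p < n then f ⟨p, h⟩ else 0

/-- `a_α = det (x_j ^ α_i)`. -/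
noncomputable def aDet (n : ℕ) (α : Fin n → ℕ) : MvPolynomial (Fin n) ℤ :=
  (Matrix.of fun i j : Fin n => (X j : MvPolynomial (Fin n) ℤ) ^ α i).det

/-- `x ^ β = ∏ x_i ^ β_i`. -/
noncomputable def xpow (n : ℕ) (β : Fin n → ℕ) : MvPolynomial (Fin n) ℤ :=
  ∏ i, X i ^ β i

/-- The monomial symmetric polynomial `m_lam(n) = Σ_{w ∈ Sₙ^lam} x^{w(lam)}`:
the sum of `x^β` over all distinct rearrangements `β` of `lam`. -/
noncomputable def msym (n : ℕ) (lam : Fin n → ℕ) : MvPolynomial (Fin n) ℤ :=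
  ∑ β ∈ Finset.univ.image (fun σ : Equiv.Perm (Fin n) => lam ∘ σ), xpow n β

/-- `δ(n) = (0, 1, …, n-1)`. -/
def deltaN (n : ℕ) : Fin n → ℕ := fun i => (i : ℕ)

/-- `P(m∣n)`: partitions of `m` as nondecreasing `n`-tuples (zeros at the beginning). -/
def Par (n m : ℕ) : Finset (Fin n → ℕ) :=
  (Fintype.piFinset fun _ : Fin n => Finset.range (m + 1)).filter
    fun μ => (∀ i j : Fin n, i ≤ j → μ i ≤ μ j) ∧ ∑ i, μ i = m

/-- `K` is the inverse Kostka matrix in `n` variables: for every weight `m` and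
every `lam ∈ P(m∣n)`, `m_lam(n) · a_{δ(n)} = Σ_{μ ∈ P(m∣n)} K lam μ · a_{μ+δ(n)}`
(equivalently `m_lam(n) = Σ_μ K lam μ · s_μ(n)`). -/
def IsInvKostka (n : ℕ) (K : (Fin n → ℕ) → (Fin n → ℕ) → ℤ) : Prop :=
  ∀ m : ℕ, ∀ lam ∈ Par n m,
    msym n lam * aDet n (deltaN n) =
      ∑ μ ∈ Par n m, C (K lam μ) * aDet n (fun i => μ i + (i : ℕ))

lemma xpow_eq_monomial (n : ℕ) (β : Fin n → ℕ) :
    xpow n β = monomial (Finsupp.equivFunOnFinite.symm β) 1 := by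
  rw [xpow, monomial_eq, Finsupp.prod_fintype _ _ (fun i => pow_zero _), map_one, one_mul]
  rfl

lemma aDet_eq (n : ℕ) (α : Fin n → ℕ) :
    aDet n α = ∑ σ : Equiv.Perm (Fin n),
      (Equiv.Perm.sign σ : ℤ) • monomial (Finsupp.equivFunOnFinite.symm (α ∘ σ)) 1 := by
  rw [aDet, Matrix.det_apply]
  refine Finset.sum_congr rfl fun σ _ => ?_
  rw [← xpow_eq_monomial]
  simp only [xpow, Matrix.of_apply, Units.smul_def, zsmul_eq_mul]
  norm_cast

lemma perm_rigid (n : ℕ) (ν μ : Fin n → ℕ) (hν : ∀ i j : Fin n, i ≤ j → ν i ≤ ν j)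
    (hμ : ∀ i j : Fin n, i ≤ j → μ i ≤ μ j) (σ : Equiv.Perm (Fin n))
    (h : ∀ i, ν (σ i) + ((σ i : ℕ)) = μ i + (i : ℕ)) : σ = 1 ∧ ν = μ := by
  have hwf : WellFoundedLT (Fin n) := inferInstance
  have hf : StrictMono fun i : Fin n => ν i + (i : ℕ) := fun i j hij =>
    add_lt_add_of_le_of_lt (hν i j hij.le) (by exact_mod_cast hij)
  have hg : StrictMono fun i : Fin n => μ i + (i : ℕ) := fun i j hij =>
    add_lt_add_of_le_of_lt (hμ i j hij.le) (by exact_mod_cast hij)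
  have hσ : StrictMono σ := fun i j hij => hf.lt_iff_lt.mp (by
    show ν (σ i) + ((σ i : ℕ)) < ν (σ j) + ((σ j : ℕ))
    rw [h i, h j]; exact hg hij)
  have hσinv : StrictMono (σ.symm : Fin n → Fin n) := fun i j hij =>
    hσ.lt_iff_lt.mp (by simpa using hij)
  have hσ1 : σ = 1 := by
    ext i
    have h1 : i ≤ σ i := @StrictMono.le_apply (Fin n) _ hwf _ hσ i
    have h2 : i ≤ σ.symm i := @StrictMono.le_apply (Fin n) _ hwf _ hσinv i
    have h3 : σ i ≤ σ (σ.symm i) := hσ.monotone h2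
    rw [Equiv.apply_symm_apply] at h3
    exact le_antisymm h3 h1
  refine ⟨hσ1, funext fun i => ?_⟩
  have := h i
  rw [hσ1] at this
  simpa using this


/-- Theorem 2: `K⁻¹_{λ,μ} = Σ ε(σ)` over solutions `(w,σ)` of `w(λ) + σ(δ(n)) = μ + δ(n)`,
where `w` ranges over coset representatives `Sₙ^λ` (equivalently, `w(λ)` ranges over the
distinct rearrangements `β` of `λ`) and `σ` over `Sₙ`. -/
theorem stmt1 (n m : ℕ) (hmn : m ≤ n)
    (K : (Fin n → ℕ) → (Fin n → ℕ) → ℤ) (hK : IsInvKostka n K)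
    (lam μ : Fin n → ℕ) (hlam : lam ∈ Par n m) (hμ : μ ∈ Par n m) :
    K lam μ =
      ∑ β ∈ Finset.univ.image (fun w : Equiv.Perm (Fin n) => lam ∘ w),
        ∑ σ ∈ (Finset.univ : Finset (Equiv.Perm (Fin n))).filter
            (fun σ => ∀ i : Fin n, β i + ((σ i : ℕ)) = μ i + (i : ℕ)),
          ((Equiv.Perm.sign σ : ℤˣ) : ℤ) := by
  classical
  set t : Fin n →₀ ℕ := Finsupp.equivFunOnFinite.symm (fun i => μ i + (i : ℕ)) with ht
  have hμmono : ∀ i j : Fin n, i ≤ j → μ i ≤ μ j := ((Finset.mem_filter.mp hμ).2).1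
  have key := congrArg (MvPolynomial.coeff t) (hK m lam hlam)
  -- right-hand side of the defining identity
  have hR : MvPolynomial.coeff t
      (∑ ν ∈ Par n m, C (K lam ν) * aDet n (fun i => ν i + (i : ℕ))) = K lam μ := by
    rw [coeff_sum]
    rw [Finset.sum_congr rfl (fun ν hν => ?_), Finset.sum_ite_eq' (Par n m) μ (fun ν => K lam ν)]
    · simp [hμ]
    · -- per-term computation
      show MvPolynomial.coeff t (C (K lam ν) * aDet n (fun i => ν i + (i : ℕ)))
          = if ν = μ then K lam ν else 0
      have hνmono : ∀ i j : Fin n, i ≤ j → ν i ≤ ν j := ((Finset.mem_filter.mp hν).2).1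
      rw [coeff_C_mul, aDet_eq, coeff_sum]
      simp only [coeff_smul, coeff_monomial, smul_eq_mul]
      have hcond : ∀ σ : Equiv.Perm (Fin n),
          (Finsupp.equivFunOnFinite.symm ((fun i => ν i + (i : ℕ)) ∘ σ) = t) ↔ (σ = 1 ∧ ν = μ) := by
        intro σ
        rw [ht, Equiv.symm_apply_eq, Equiv.apply_symm_apply]
        constructor
        · intro hc
          exact perm_rigid n ν μ hνmono hμmono σ (fun i => congrFun hc i)
        · rintro ⟨rfl, rfl⟩
          rfl
      by_cases hvm : ν = μ
      · subst hvm
        rw [if_pos rfl]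
        rw [Finset.sum_eq_single (1 : Equiv.Perm (Fin n))]
        · simp [(hcond 1).mpr ⟨rfl, rfl⟩, ht]
        · intro σ _ hσne
          rw [if_neg, mul_zero]
          intro hc
          exact hσne ((hcond σ).mp hc).1
        · simp
      · rw [if_neg hvm]
        rw [mul_eq_zero]; right
        refine Finset.sum_eq_zero fun σ _ => ?_
        rw [if_neg, mul_zero]
        intro hc
        exact hvm ((hcond σ).mp hc).2
  -- left-hand side of the defining identity
  have hL : MvPolynomial.coeff t (msym n lam * aDet n (deltaN n)) =
      ∑ β ∈ Finset.univ.image (fun w : Equiv.Perm (Fin n) => lam ∘ w),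
        ∑ σ ∈ (Finset.univ : Finset (Equiv.Perm (Fin n))).filter
            (fun σ => ∀ i : Fin n, β i + ((σ i : ℕ)) = μ i + (i : ℕ)),
          ((Equiv.Perm.sign σ : ℤˣ) : ℤ) := by
    rw [msym, aDet_eq, Finset.sum_mul_sum, coeff_sum]
    refine Finset.sum_congr rfl fun β hβ => ?_
    rw [coeff_sum, Finset.sum_filter]
    refine Finset.sum_congr rfl fun σ _ => ?_
    rw [xpow_eq_monomial, mul_smul_comm, coeff_smul, monomial_mul, coeff_monomial, one_mul]
    have hcond : (Finsupp.equivFunOnFinite.symm β + Finsupp.equivFunOnFinite.symm (deltaN n ∘ σ) = t)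
        ↔ (∀ i : Fin n, β i + ((σ i : ℕ)) = μ i + (i : ℕ)) := by
      rw [ht, Finsupp.ext_iff]
      apply forall_congr'
      intro i
      simp [Finsupp.add_apply, deltaN]
    rw [smul_eq_mul]
    by_cases hc : ∀ i : Fin n, β i + ((σ i : ℕ)) = μ i + (i : ℕ)
    · rw [if_pos (hcond.mpr hc), if_pos hc, mul_one]
    · rw [if_neg (fun h => hc (hcond.mp h)), if_neg hc, mul_zero]
  rw [← hL, key, hR]
end

section
/- Let λ = (λ_1,…,λ_n), μ = (μ_1,…,μ_n) ∈ P(m|n) with μ_n ≥ λ_n. If μ_n = λ_n then K^{-1}_{λ,μ} = K^{-1}_{(λ_1,…,λ_{n−1}),(μ_1,…,μ_{n−1})} (an inverse Kostka number of partitions of m − λ_n in n−1 variables), and if μ_n > λ_n then K^{-1}_{λ,μ} = 0. -/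
open Finset MvPolynomial

namespace Stmt7Aux

variable {k : ℕ}

noncomputable def toF (α : Fin k → ℕ) : Fin k →₀ ℕ := Finsupp.equivFunOnFinite.symm α

@[simp] lemma toF_apply (α : Fin k → ℕ) (i : Fin k) : toF α i = α i := rfl

lemma toF_inj {α β : Fin k → ℕ} (h : toF α = toF β) : α = β :=
  Finsupp.equivFunOnFinite.symm.injective h

lemma toF_add (α β : Fin k → ℕ) : toF α + toF β = toF (fun i => α i + β i) := by
  ext i; simp [Finsupp.add_apply]

lemma xpow_eq (β : Fin k → ℕ) : xpow k β = monomial (toF β) 1 := by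
  rw [xpow, monomial_eq, map_one, one_mul, Finsupp.prod_fintype]
  · rfl
  · intro i; exact pow_zero _

lemma aDet_eq (α : Fin k → ℕ) :
    aDet k α = ∑ σ : Equiv.Perm (Fin k), monomial (toF (α ∘ σ)) ((Equiv.Perm.sign σ : ℤ)) := by
  rw [aDet, Matrix.det_apply]
  refine Finset.sum_congr rfl fun σ _ => ?_
  have h1 : ∏ i, (Matrix.of fun i j : Fin k => (X j : MvPolynomial (Fin k) ℤ) ^ α i) (σ i) i
      = monomial (toF (α ∘ σ)) 1 := by
    rw [← xpow_eq, xpow]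
    rfl
  rw [h1, Units.smul_def, smul_monomial, smul_eq_mul, mul_one]

lemma mem_Par_iff {m : ℕ} {μ : Fin k → ℕ} :
    μ ∈ Par k m ↔ (∀ i j : Fin k, i ≤ j → μ i ≤ μ j) ∧ ∑ i, μ i = m := by
  constructor
  · intro h; exact (Finset.mem_filter.1 h).2
  · intro h
    refine Finset.mem_filter.2 ⟨Fintype.mem_piFinset.2 fun i => ?_, h⟩
    refine Finset.mem_range.2 (Nat.lt_succ_of_le ?_)
    rw [← h.2]
    exact Finset.single_le_sum (fun j _ => Nat.zero_le _) (Finset.mem_univ i)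

lemma strictMono_addN {μ : Fin k → ℕ} (h : ∀ i j : Fin k, i ≤ j → μ i ≤ μ j) :
    StrictMono (fun i : Fin k => μ i + (i : ℕ)) := by
  intro i j hij
  have h1 := h i j hij.le
  have h2 : (i : ℕ) < (j : ℕ) := hij
  show μ i + (i : ℕ) < μ j + (j : ℕ)
  omega

lemma coeff_aDet {μ ν : Fin k → ℕ} (hμ : ∀ i j : Fin k, i ≤ j → μ i ≤ μ j)
    (hν : ∀ i j : Fin k, i ≤ j → ν i ≤ ν j) :
    coeff (toF fun i => μ i + (i : ℕ)) (aDet k fun i => ν i + (i : ℕ)) =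
      if ν = μ then 1 else 0 := by
  rw [aDet_eq, coeff_sum]
  simp_rw [coeff_monomial]
  rw [Finset.sum_eq_single (1 : Equiv.Perm (Fin k))]
  · by_cases h : ν = μ
    · subst h; simp
    · rw [if_neg, if_neg h]
      intro hc
      apply h
      funext i
      have h3 := congrFun (toF_inj hc) i
      simp only [Function.comp_apply, Equiv.Perm.coe_one, id_eq] at h3
      omega
  · intro σ _ hσ
    rw [if_neg]
    intro hc
    have hfun : ∀ i : Fin k, ν (σ i) + ((σ i : Fin k) : ℕ) = μ i + (i : ℕ) := by
      intro i
      exact congrFun (toF_inj hc) i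
    have hsm : StrictMono ⇑σ := by
      intro i j hij
      have h2 := (strictMono_addN hμ) hij
      have : (fun i : Fin k => ν i + (i : ℕ)) (σ i) < (fun i : Fin k => ν i + (i : ℕ)) (σ j) := by
        simpa [hfun i, hfun j] using h2
      exact (strictMono_addN hν).lt_iff_lt.1 this
    apply hσ
    have hid : ⇑σ = id := by
      have i1 : WellFoundedLT (Fin k) := inferInstance
      refine (@StrictMono.range_inj (Fin k) (Fin k) _ _ i1 _ _ hsm strictMono_id).1 ?_
      simp [Set.range_eq_univ.2 σ.surjective]
    exact Equiv.ext fun i => congrFun hid i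
  · simp

lemma extract {m : ℕ} (c : (Fin k → ℕ) → ℤ) {ν : Fin k → ℕ} (hν : ν ∈ Par k m) :
    coeff (toF fun i => ν i + (i : ℕ))
        (∑ μ ∈ Par k m, C (c μ) * aDet k fun i => μ i + (i : ℕ)) = c ν := by
  rw [coeff_sum]
  have h1 : ∀ μ ∈ Par k m,
      coeff (toF fun i => ν i + (i : ℕ)) (C (c μ) * aDet k fun i => μ i + (i : ℕ)) =
        if μ = ν then c μ else 0 := by
    intro μ hμ
    rw [coeff_C_mul, coeff_aDet (mem_Par_iff.1 hν).1 (mem_Par_iff.1 hμ).1]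
    by_cases h : μ = ν <;> simp [h]
  rw [Finset.sum_congr rfl h1, Finset.sum_ite_eq' (Par k m) ν c, if_pos hν]

lemma K_formula {m : ℕ} {K : (Fin k → ℕ) → (Fin k → ℕ) → ℤ} (hK : IsInvKostka k K)
    {lam ν : Fin k → ℕ} (hlam : lam ∈ Par k m) (hν : ν ∈ Par k m) :
    K lam ν = coeff (toF fun i => ν i + (i : ℕ)) (msym k lam * aDet k (deltaN k)) := by
  rw [hK m lam hlam, extract _ hν]

lemma coeff_msym_mul (lam ν : Fin k → ℕ) :
    coeff (toF fun i => ν i + (i : ℕ)) (msym k lam * aDet k (deltaN k)) =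
      ∑ β ∈ Finset.univ.image (fun σ : Equiv.Perm (Fin k) => lam ∘ σ),
        ∑ σ : Equiv.Perm (Fin k),
          if ∀ i : Fin k, β i + ((σ i : Fin k) : ℕ) = ν i + (i : ℕ)
            then ((Equiv.Perm.sign σ : ℤ)) else 0 := by
  rw [msym, aDet_eq, Finset.sum_mul]
  rw [coeff_sum]
  refine Finset.sum_congr rfl fun β _ => ?_
  rw [xpow_eq, Finset.mul_sum, coeff_sum]
  refine Finset.sum_congr rfl fun σ _ => ?_
  rw [monomial_mul, one_mul, coeff_monomial]
  refine if_congr ?_ rfl rfl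
  rw [toF_add]
  constructor
  · intro h i
    exact congrFun (toF_inj h) i
  · intro h
    congr 1
    funext i
    exact h i

variable {n : ℕ}

lemma image_le {lam β : Fin (n+1) → ℕ} (hmono : ∀ i j : Fin (n+1), i ≤ j → lam i ≤ lam j)
    (hβ : β ∈ Finset.univ.image (fun σ : Equiv.Perm (Fin (n+1)) => lam ∘ σ)) (i : Fin (n+1)) :
    β i ≤ lam (Fin.last n) := by
  obtain ⟨τ, -, hτ⟩ := Finset.mem_image.1 hβ
  calc β i = lam (τ i) := by rw [← hτ]; rfl
  _ ≤ lam (Fin.last n) := hmono _ _ (Fin.le_last _)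

lemma case_gt {lam ν : Fin (n+1) → ℕ} (hmono : ∀ i j : Fin (n+1), i ≤ j → lam i ≤ lam j)
    (hlt : lam (Fin.last n) < ν (Fin.last n)) :
    coeff (toF fun i => ν i + (i : ℕ)) (msym (n+1) lam * aDet (n+1) (deltaN (n+1))) = 0 := by
  rw [coeff_msym_mul]
  refine Finset.sum_eq_zero fun β hβ => Finset.sum_eq_zero fun σ _ => ?_
  rw [if_neg]
  intro h
  have h1 := h (Fin.last n)
  have h2 := image_le hmono hβ (Fin.last n)
  have h3 : ((σ (Fin.last n)) : ℕ) ≤ n := Fin.is_le _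
  have h4 : ((Fin.last n) : ℕ) = n := rfl
  omega

def eLast (n : ℕ) : Fin n ≃ {i : Fin (n+1) // i ≠ Fin.last n} where
  toFun i := ⟨i.castSucc, Fin.ne_last_of_lt (Fin.castSucc_lt_last i)⟩
  invFun j := j.1.castPred j.2
  left_inv i := Fin.castPred_castSucc _
  right_inv j := Subtype.ext (Fin.castSucc_castPred _ _)

def extLast (σ : Equiv.Perm (Fin n)) : Equiv.Perm (Fin (n+1)) := σ.extendDomain (eLast n)

lemma extLast_castSucc (σ : Equiv.Perm (Fin n)) (i : Fin n) :
    extLast σ i.castSucc = (σ i).castSucc := by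
  have h := Equiv.Perm.extendDomain_apply_image σ (eLast n) i
  simpa [eLast, extLast] using h

lemma extLast_last (σ : Equiv.Perm (Fin n)) : extLast σ (Fin.last n) = Fin.last n :=
  Equiv.Perm.extendDomain_apply_not_subtype σ (eLast n) (by simp)

lemma sign_extLast (σ : Equiv.Perm (Fin n)) :
    Equiv.Perm.sign (extLast σ) = Equiv.Perm.sign σ :=
  Equiv.Perm.sign_extendDomain σ (eLast n)

lemma aux_ne (σ : Equiv.Perm (Fin (n+1))) (h : σ (Fin.last n) = Fin.last n) (i : Fin n) :
    σ i.castSucc ≠ Fin.last n := fun hc =>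
  (Fin.ne_last_of_lt (Fin.castSucc_lt_last i)) (σ.injective (hc.trans h.symm))

lemma inv_last (σ : Equiv.Perm (Fin (n+1))) (h : σ (Fin.last n) = Fin.last n) :
    σ⁻¹ (Fin.last n) = Fin.last n := by
  conv_lhs => rw [← h]
  exact Equiv.symm_apply_apply σ _

def resLast (σ : Equiv.Perm (Fin (n+1))) (h : σ (Fin.last n) = Fin.last n) :
    Equiv.Perm (Fin n) :=
  (eLast n).permCongr.symm (σ.subtypePerm (fun x => not_congr
    ⟨fun hx => σ.injective (hx.trans h.symm), fun hx => by rw [hx, h]⟩))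

lemma resLast_castSucc (σ : Equiv.Perm (Fin (n+1))) (h : σ (Fin.last n) = Fin.last n)
    (i : Fin n) : (resLast σ h i).castSucc = σ i.castSucc := by
  have h1 : resLast σ h i = (σ i.castSucc).castPred (aux_ne σ h i) := by
    simp [resLast, eLast, Equiv.permCongr_symm, Equiv.permCongr_apply]
  rw [h1]
  exact Fin.castSucc_castPred _ _

lemma extLast_resLast (σ : Equiv.Perm (Fin (n+1))) (h : σ (Fin.last n) = Fin.last n) :
    extLast (resLast σ h) = σ := by
  apply Equiv.ext
  intro j
  refine Fin.lastCases ?_ (fun i => ?_) j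
  · rw [extLast_last, h]
  · rw [extLast_castSucc, resLast_castSucc]

lemma inner_sum (β ν : Fin (n+1) → ℕ) (hβr : β (Fin.last n) = ν (Fin.last n)) :
    (∑ σ : Equiv.Perm (Fin (n+1)),
        if ∀ i : Fin (n+1), β i + ((σ i) : ℕ) = ν i + (i : ℕ)
          then ((Equiv.Perm.sign σ : ℤ)) else 0) =
      ∑ σ' : Equiv.Perm (Fin n),
        if ∀ i : Fin n, β i.castSucc + ((σ' i) : ℕ) = ν i.castSucc + (i : ℕ)
          then ((Equiv.Perm.sign σ' : ℤ)) else 0 := by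
  have h0 : ∀ σ : Equiv.Perm (Fin (n+1)), σ ∈ (Finset.univ : Finset (Equiv.Perm (Fin (n+1)))) →
      (if ∀ i : Fin (n+1), β i + ((σ i) : ℕ) = ν i + (i : ℕ)
        then ((Equiv.Perm.sign σ : ℤ)) else 0) ≠ 0 → σ (Fin.last n) = Fin.last n := by
    intro σ _ hne
    by_cases hcond : ∀ i : Fin (n+1), β i + ((σ i) : ℕ) = ν i + (i : ℕ)
    · have h1 := hcond (Fin.last n)
      have h4 : ((Fin.last n) : ℕ) = n := rfl
      have h5 : ((σ (Fin.last n)) : ℕ) = n := by omega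
      exact Fin.ext (by rw [h5, h4])
    · rw [if_neg hcond] at hne; exact absurd rfl hne
  rw [← Finset.sum_filter_of_ne h0]
  refine Finset.sum_bij' (fun σ hσ => resLast σ (Finset.mem_filter.1 hσ).2)
    (fun σ' _ => extLast σ') (fun σ' _ => Finset.mem_univ _)
    (fun σ' _ => Finset.mem_filter.2 ⟨Finset.mem_univ _, extLast_last σ'⟩)
    (fun σ hσ => extLast_resLast σ _) ?_ ?_
  · intro σ' _
    apply Equiv.ext
    intro i
    have h6 := resLast_castSucc (extLast σ') (extLast_last σ') i
    rw [extLast_castSucc] at h6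
    exact Fin.castSucc_injective n h6
  · intro σ hσ
    have hfix := (Finset.mem_filter.1 hσ).2
    have hsign : Equiv.Perm.sign σ = Equiv.Perm.sign (resLast σ hfix) := by
      conv_lhs => rw [← extLast_resLast σ hfix]
      exact sign_extLast _
    refine if_congr ?_ (by rw [hsign]) rfl
    constructor
    · intro h i
      have h1 := h i.castSucc
      have h2 : ((resLast σ hfix i) : ℕ) = ((σ i.castSucc) : ℕ) := by
        rw [← resLast_castSucc σ hfix i]; rfl
      have h3 : ((i.castSucc) : ℕ) = (i : ℕ) := rfl
      omega
    · intro h j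
      refine Fin.lastCases ?_ (fun i => ?_) j
      · rw [hβr, hfix]
      · have h1 := h i
        have h2 : ((resLast σ hfix i) : ℕ) = ((σ i.castSucc) : ℕ) := by
          rw [← resLast_castSucc σ hfix i]; rfl
        have h3 : ((i.castSucc) : ℕ) = (i : ℕ) := rfl
        omega

lemma snoc_mem {lam : Fin (n+1) → ℕ} {β' : Fin n → ℕ}
    (hβ' : β' ∈ Finset.univ.image
      (fun σ : Equiv.Perm (Fin n) => (fun i : Fin n => lam i.castSucc) ∘ σ)) :
    Fin.snoc β' (lam (Fin.last n)) ∈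
      Finset.univ.image (fun σ : Equiv.Perm (Fin (n+1)) => lam ∘ σ) := by
  obtain ⟨τ, -, hτ⟩ := Finset.mem_image.1 hβ'
  refine Finset.mem_image.2 ⟨extLast τ, Finset.mem_univ _, ?_⟩
  funext j
  refine Fin.lastCases ?_ (fun i => ?_) j
  · show lam (extLast τ (Fin.last n)) = _
    rw [extLast_last, Fin.snoc_last]
  · show lam (extLast τ i.castSucc) = _
    rw [extLast_castSucc, Fin.snoc_castSucc, ← hτ]
    rfl

lemma mem_image_castSucc {lam β : Fin (n+1) → ℕ}
    (hmono : ∀ i j : Fin (n+1), i ≤ j → lam i ≤ lam j)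
    (hβ : β ∈ Finset.univ.image (fun σ : Equiv.Perm (Fin (n+1)) => lam ∘ σ))
    (hlast : β (Fin.last n) = lam (Fin.last n)) :
    (fun i : Fin n => β i.castSucc) ∈ Finset.univ.image
      (fun σ : Equiv.Perm (Fin n) => (fun i : Fin n => lam i.castSucc) ∘ σ) := by
  obtain ⟨τ, -, hτ⟩ := Finset.mem_image.1 hβ
  set π : Equiv.Perm (Fin (n+1)) := τ * Equiv.swap (Fin.last n) (τ⁻¹ (Fin.last n)) with hπdef
  have hπlast : π (Fin.last n) = Fin.last n := by
    rw [hπdef, Equiv.Perm.mul_apply, Equiv.swap_apply_left, ← Equiv.Perm.mul_apply, mul_inv_cancel, Equiv.Perm.one_apply]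
  have hπ : ∀ i : Fin (n+1), lam (π i) = β i := by
    intro i
    rcases eq_or_ne i (Fin.last n) with h1 | h1
    · rw [h1, hπlast, hlast]
    · rcases eq_or_ne i (τ⁻¹ (Fin.last n)) with h2 | h2
      · have e1 : π i = τ (Fin.last n) := by
          rw [hπdef, Equiv.Perm.mul_apply, h2, Equiv.swap_apply_right]
        have e2 : β i = lam (Fin.last n) := by
          rw [← hτ, Function.comp_apply, h2, ← Equiv.Perm.mul_apply, mul_inv_cancel, Equiv.Perm.one_apply]
        have e3 : lam (τ (Fin.last n)) = lam (Fin.last n) := by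
          have := congrFun hτ (Fin.last n)
          rw [← hlast]
          exact this
        rw [e1, e3, e2]
      · have e1 : π i = τ i := by
          rw [hπdef, Equiv.Perm.mul_apply, Equiv.swap_apply_of_ne_of_ne h1 h2]
        rw [e1, ← hτ]
        rfl
  refine Finset.mem_image.2 ⟨resLast π hπlast, Finset.mem_univ _, ?_⟩
  funext i
  show lam ((resLast π hπlast i).castSucc) = β i.castSucc
  rw [resLast_castSucc, hπ]

lemma case_eq {lam ν : Fin (n+1) → ℕ} (hmono : ∀ i j : Fin (n+1), i ≤ j → lam i ≤ lam j)
    (hr : ν (Fin.last n) = lam (Fin.last n)) :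
    coeff (toF fun i => ν i + (i : ℕ)) (msym (n+1) lam * aDet (n+1) (deltaN (n+1))) =
      coeff (toF fun i : Fin n => ν i.castSucc + (i : ℕ))
        (msym n (fun i : Fin n => lam i.castSucc) * aDet n (deltaN n)) := by
  rw [coeff_msym_mul, coeff_msym_mul]
  have h0 : ∀ β ∈ Finset.univ.image (fun σ : Equiv.Perm (Fin (n+1)) => lam ∘ σ),
      (∑ σ : Equiv.Perm (Fin (n+1)),
        if ∀ i : Fin (n+1), β i + ((σ i) : ℕ) = ν i + (i : ℕ)
          then ((Equiv.Perm.sign σ : ℤ)) else 0) ≠ 0 →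
      β (Fin.last n) = lam (Fin.last n) := by
    intro β hβ hne
    by_contra hne2
    apply hne
    refine Finset.sum_eq_zero fun σ _ => if_neg ?_
    intro hcond
    have h1 := hcond (Fin.last n)
    have h2 := image_le hmono hβ (Fin.last n)
    have h3 : ((σ (Fin.last n)) : ℕ) ≤ n := Fin.is_le _
    have h4 : ((Fin.last n) : ℕ) = n := rfl
    omega
  rw [← Finset.sum_filter_of_ne h0]
  refine Finset.sum_bij' (fun β _ => fun i : Fin n => β i.castSucc)
    (fun β' _ => Fin.snoc β' (lam (Fin.last n))) ?_ ?_ ?_ ?_ ?_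
  · intro β hβ
    exact mem_image_castSucc hmono (Finset.mem_filter.1 hβ).1 (Finset.mem_filter.1 hβ).2
  · intro β' hβ'
    refine Finset.mem_filter.2 ⟨snoc_mem hβ', ?_⟩
    exact Fin.snoc_last _ _
  · intro β hβ
    funext j
    refine Fin.lastCases ?_ (fun i => ?_) j
    · rw [Fin.snoc_last]
      exact ((Finset.mem_filter.1 hβ).2).symm
    · exact Fin.snoc_castSucc _ _ _
  · intro β' _
    funext i
    exact Fin.snoc_castSucc _ _ _
  · intro β hβ
    dsimp only
    have hβr : β (Fin.last n) = ν (Fin.last n) := by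
      rw [(Finset.mem_filter.1 hβ).2, hr]
    exact inner_sum β ν hβr

end Stmt7Aux

/-- (2.2): for partitions of `m` with `n+1` parts and `μ_{n+1} ≥ λ_{n+1}`:
if `μ_{n+1} = λ_{n+1}` then `K⁻¹_{λ,μ} = K⁻¹_{(λ₁,…,λ_n),(μ₁,…,μ_n)}` (in `n` variables),
and if `μ_{n+1} > λ_{n+1}` then `K⁻¹_{λ,μ} = 0`. -/


theorem stmt7 (n m : ℕ) (hmn : m ≤ n + 1)
    (K : (Fin (n + 1) → ℕ) → (Fin (n + 1) → ℕ) → ℤ) (hK : IsInvKostka (n + 1) K)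
    (K' : (Fin n → ℕ) → (Fin n → ℕ) → ℤ) (hK' : IsInvKostka n K')
    (lam μ : Fin (n + 1) → ℕ) (hlam : lam ∈ Par (n + 1) m) (hμ : μ ∈ Par (n + 1) m)
    (hle : lam (Fin.last n) ≤ μ (Fin.last n)) :
    (μ (Fin.last n) = lam (Fin.last n) →
        K lam μ = K' (fun i => lam i.castSucc) (fun i => μ i.castSucc)) ∧
    (lam (Fin.last n) < μ (Fin.last n) → K lam μ = 0) := by
  obtain ⟨hlmono, hlsum⟩ := Stmt7Aux.mem_Par_iff.1 hlam
  obtain ⟨hμmono, hμsum⟩ := Stmt7Aux.mem_Par_iff.1 hμ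
  constructor
  · intro heq
    set m' := ∑ i : Fin n, lam i.castSucc with hm'
    have hlam' : (fun i : Fin n => lam i.castSucc) ∈ Par n m' :=
      Stmt7Aux.mem_Par_iff.2
        ⟨fun i j hij => hlmono _ _ (Fin.castSucc_le_castSucc_iff.2 hij), rfl⟩
    have hμ' : (fun i : Fin n => μ i.castSucc) ∈ Par n m' := by
      refine Stmt7Aux.mem_Par_iff.2
        ⟨fun i j hij => hμmono _ _ (Fin.castSucc_le_castSucc_iff.2 hij), ?_⟩
      have e1 := Fin.sum_univ_castSucc (f := lam)
      have e2 := Fin.sum_univ_castSucc (f := μ)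
      omega
    rw [Stmt7Aux.K_formula hK hlam hμ, Stmt7Aux.case_eq hlmono heq,
      ← Stmt7Aux.K_formula hK' hlam' hμ']
  · intro hlt
    rw [Stmt7Aux.K_formula hK hlam hμ, Stmt7Aux.case_gt hlmono hlt]
end
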